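/- Let D = (A, B) ⊂ ℝ be a bounded open interval with A < y < ∞, and suppose u : [A, B) → [0, ∞) is C² on (A, B), continuous at A, and satisfies u'' = 4u² on (A, B), u(A) = 0, and u(x) → ∞ as x → B⁻. Then for every x ∈ (A, B), ∫₀^{u(x)} du/√((8/3)u³ + C) = x − A, where C = (u'(A))² ≥ 0; in particular u is strictly increasing on (A, B). -/

import Mathlib

open MeasureTheory Set Filter

private lemma mvt_aux {A B : ℝ} {g g' : ℝ → ℝ}
    (hg : ∀ x ∈ Set.Ioo A B, HasDerivAt g (g' x) x)
    {x y : ℝ} (hx : x ∈ Set.Ioo A B) (hy : y ∈ Set.Ioo A B) (hxy : x < y) :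
    ∃ c ∈ Set.Ioo x y, g' c = (g y - g x) / (y - x) := by
  refine exists_hasDerivAt_eq_slope g g' hxy ?_ ?_
  · intro z hz
    exact ((hg z ⟨lt_of_lt_of_le hx.1 hz.1, lt_of_le_of_lt hz.2 hy.2⟩).continuousAt).continuousWithinAt
  · intro z hz
    exact hg z ⟨hx.1.trans hz.1, hz.2.trans hy.2⟩

private lemma const_aux {A B L : ℝ} {g : ℝ → ℝ} (hAB : A < B)
    (hg : ∀ x ∈ Set.Ioo A B, HasDerivAt g 0 x)
    (hlim : Filter.Tendsto g (nhdsWithin A (Set.Ioi A)) (nhds L)) :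
    ∀ x ∈ Set.Ioo A B, g x = L := by
  have key : ∀ x ∈ Set.Ioo A B, ∀ y ∈ Set.Ioo A B, x < y → g x = g y := by
    intro x hx y hy hxy
    obtain ⟨c, _, hc⟩ := mvt_aux (g' := fun _ => (0 : ℝ)) hg hx hy hxy
    have hne : y - x ≠ 0 := (sub_pos.2 hxy).ne'
    field_simp at hc
    linarith
  intro x hx
  have hev : ∀ᶠ y in nhdsWithin A (Set.Ioi A), g y = g x := by
    filter_upwards [Ioo_mem_nhdsGT hx.1] with y hy
    exact key y ⟨hy.1, hy.2.trans hx.2⟩ x hx hy.2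
  exact tendsto_nhds_unique
    (tendsto_const_nhds.congr' (hev.mono fun y h => h.symm)) hlim

/-- Boundary value problem `u'' = 4u²` on `(A,B)` with `u(A) = 0` and blow-up at `B`:
the first integral gives `∫₀^{u(x)} dt/√((8/3)t³ + (u'(A))²) = x − A`, and `u` is
strictly increasing on `(A,B)`. -/
theorem ode_first_integral (A B : ℝ) (hAB : A < B) (u v : ℝ → ℝ)
    (hu' : ∀ x ∈ Ioo A B, HasDerivAt u (v x) x)
    (hv' : ∀ x ∈ Ioo A B, HasDerivAt v (4 * (u x) ^ 2) x)
    (hunn : ∀ x ∈ Ico A B, 0 ≤ u x)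
    (hucont : ContinuousWithinAt u (Ici A) A)
    (hvcont : Tendsto v (nhdsWithin A (Ioi A)) (nhds (v A)))
    (huA : u A = 0)
    (hblow : Tendsto u (nhdsWithin B (Iio B)) atTop) :
    (∀ x ∈ Ioo A B,
      ∫ t in (0 : ℝ)..(u x), 1 / Real.sqrt ((8 / 3) * t ^ 3 + (v A) ^ 2) = x - A) ∧
    StrictMonoOn u (Ioo A B) := by
  have hcu : ∀ x ∈ Ioo A B, ContinuousAt u x := fun x hx => (hu' x hx).continuousAt
  have hcv : ∀ x ∈ Ioo A B, ContinuousAt v x := fun x hx => (hv' x hx).continuousAt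
  have hulim : Tendsto u (nhdsWithin A (Ioi A)) (nhds 0) := by
    have h := hucont.tendsto
    rw [huA] at h
    exact h.mono_left (nhdsWithin_mono A Ioi_subset_Ici_self)
  -- Energy identity
  have energy : ∀ x ∈ Ioo A B, (v x) ^ 2 = (8 / 3) * (u x) ^ 3 + (v A) ^ 2 := by
    have hg : ∀ x ∈ Ioo A B,
        HasDerivAt (fun y => (v y) ^ 2 - (8 / 3) * (u y) ^ 3) 0 x := by
      intro x hx
      have h1 := (hv' x hx).pow 2
      have h2 := ((hu' x hx).pow 3).const_mul ((8 : ℝ) / 3)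
      have h3 := h1.sub h2
      refine h3.congr_deriv ?_
      push_cast
      ring
    have hlim : Tendsto (fun y => (v y) ^ 2 - (8 / 3) * (u y) ^ 3)
        (nhdsWithin A (Ioi A)) (nhds ((v A) ^ 2)) := by
      have h := ((hvcont.pow 2)).sub ((hulim.pow 3).const_mul ((8 : ℝ) / 3))
      simpa using h
    intro x hx
    have h := const_aux hAB hg hlim x hx
    linarith
  -- v is monotone on (A,B)
  have hvmono : ∀ x ∈ Ioo A B, ∀ y ∈ Ioo A B, x ≤ y → v x ≤ v y := by
    intro x hx y hy hxy
    rcases eq_or_lt_of_le hxy with rfl | h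
    · exact le_refl _
    obtain ⟨c, hc, hc2⟩ := mvt_aux hv' hx hy h
    rw [eq_div_iff (sub_pos.2 h).ne'] at hc2
    nlinarith [sq_nonneg (u c), sub_pos.2 h]
  -- v is nonnegative on (A,B)
  have hvnn : ∀ x ∈ Ioo A B, 0 ≤ v x := by
    intro x hx
    by_contra hneg
    push_neg at hneg
    have key : ∀ y ∈ Ioo A x, u x ≤ u y + v x * (x - y) := by
      intro y hy
      have hyI : y ∈ Ioo A B := ⟨hy.1, hy.2.trans hx.2⟩
      obtain ⟨c, hc, hc2⟩ := mvt_aux hu' hyI hx hy.2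
      have hcI : c ∈ Ioo A B := ⟨hy.1.trans hc.1, hc.2.trans hx.2⟩
      have h1 : v c ≤ v x := hvmono c hcI x hx (le_of_lt hc.2)
      have hxy : (0 : ℝ) < x - y := sub_pos.2 hy.2
      rw [eq_div_iff hxy.ne'] at hc2
      nlinarith [mul_le_mul_of_nonneg_right h1 hxy.le]
    have hlim2 : Tendsto (fun y => u y + v x * (x - y)) (nhdsWithin A (Ioi A))
        (nhds (0 + v x * (x - A))) := by
      refine hulim.add (Tendsto.mono_left ?_ nhdsWithin_le_nhds)
      exact (continuous_const.mul (continuous_const.sub continuous_id)).tendsto A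
    have hle : u x ≤ 0 + v x * (x - A) := by
      refine ge_of_tendsto hlim2 ?_
      filter_upwards [Ioo_mem_nhdsGT hx.1] with y hy
      exact key y hy
    have hxnn : 0 ≤ u x := hunn x ⟨hx.1.le, hx.2⟩
    nlinarith [sub_pos.2 hx.1]
  -- v A ≠ 0, i.e. C > 0
  have hCpos : 0 < (v A) ^ 2 := by
    rcases eq_or_ne (v A) 0 with h0 | h0
    · exfalso
      have hall : ∀ x₂ ∈ Ioo A B, u x₂ = 0 := by
        intro x₂ hx₂
        have hcuIcc : ContinuousOn u (Icc A x₂) := by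
          intro z hz
          rcases eq_or_lt_of_le hz.1 with rfl | hz1
          · exact hucont.mono (fun w hw => hw.1)
          · exact (hcu z ⟨hz1, lt_of_le_of_lt hz.2 hx₂.2⟩).continuousWithinAt
        obtain ⟨m, hm, hmax⟩ := isCompact_Icc.exists_isMaxOn
          (nonempty_Icc.2 hx₂.1.le) hcuIcc
        have hU0 : 0 ≤ u m := hunn m ⟨hm.1, lt_of_le_of_lt hm.2 hx₂.2⟩
        set U := u m with hUdef
        set K := 4 * Real.sqrt (3 * U / 8) with hKdef
        have hK0 : 0 ≤ K := by positivity
        have hKsq : K ^ 2 = 6 * U := by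
          have h : Real.sqrt (3 * U / 8) ^ 2 = 3 * U / 8 :=
            Real.sq_sqrt (by positivity)
          rw [hKdef, mul_pow, h]
          ring
        have main : ∀ a ∈ Ioo A x₂, ‖v x₂‖ ≤ ‖v a‖ * Real.exp (K * (x₂ - A)) := by
          intro a ha
          have hsub : Icc a x₂ ⊆ Ioo A B :=
            fun z hz => ⟨ha.1.trans_le hz.1, lt_of_le_of_lt hz.2 hx₂.2⟩
          have hcvIcc : ContinuousOn v (Icc a x₂) :=
            fun z hz => (hcv z (hsub hz)).continuousWithinAt
          have hbound : ∀ z ∈ Ico a x₂, ‖4 * u z ^ 2‖ ≤ K * ‖v z‖ + 0 := by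
            intro z hz
            have hzI : z ∈ Ioo A B := hsub ⟨hz.1, hz.2.le⟩
            have hen := energy z hzI
            rw [h0] at hen
            have hz0 : 0 ≤ u z := hunn z ⟨hzI.1.le, hzI.2⟩
            have hzU : u z ≤ U := hmax (⟨hzI.1.le, hz.2.le⟩ : z ∈ Icc A x₂)
            have hnv : ‖v z‖ ^ 2 = v z ^ 2 := sq_abs (v z)
            have e1 : u z ^ 3 = 3 / 8 * v z ^ 2 := by nlinarith [hen]
            have h1 : (4 * u z ^ 2) ^ 2 ≤ (K * ‖v z‖) ^ 2 := by
              rw [mul_pow K ‖v z‖, hKsq, hnv]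
              have e2 : (4 * u z ^ 2) ^ 2 = 16 * (u z * u z ^ 3) := by ring
              rw [e2, e1]
              nlinarith [mul_le_mul_of_nonneg_right hzU (sq_nonneg (v z))]
            have h2 : 4 * u z ^ 2 ≤ K * ‖v z‖ :=
              le_of_pow_le_pow_left₀ two_ne_zero (by positivity) h1
            have h3 : ‖4 * u z ^ 2‖ = 4 * u z ^ 2 := by
              rw [Real.norm_eq_abs, abs_of_nonneg (by positivity)]
            rw [h3, add_zero]
            exact h2
          have hgr := norm_le_gronwallBound_of_norm_deriv_right_le hcvIcc
            (fun z hz => (hv' z (hsub ⟨hz.1, hz.2.le⟩)).hasDerivWithinAt)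
            (le_refl ‖v a‖) hbound x₂ ⟨ha.2.le, le_refl x₂⟩
          rw [gronwallBound_ε0] at hgr
          refine hgr.trans ?_
          refine mul_le_mul_of_nonneg_left ?_ (norm_nonneg _)
          exact Real.exp_le_exp.2
            (mul_le_mul_of_nonneg_left (by linarith [ha.1] : x₂ - a ≤ x₂ - A) hK0)
        have hvlim0 : Tendsto (fun a => ‖v a‖ * Real.exp (K * (x₂ - A)))
            (nhdsWithin A (Ioi A)) (nhds (‖v A‖ * Real.exp (K * (x₂ - A)))) :=
          (hvcont.norm).mul_const _
        rw [h0, norm_zero, zero_mul] at hvlim0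
        have hle : ‖v x₂‖ ≤ 0 := by
          refine ge_of_tendsto hvlim0 ?_
          filter_upwards [Ioo_mem_nhdsGT hx₂.1] with a ha
          exact main a ha
        have hv0 : v x₂ = 0 := norm_le_zero_iff.1 hle
        have hen := energy x₂ hx₂
        rw [h0, hv0] at hen
        have h3 : u x₂ ^ 3 = 0 := by linarith
        exact pow_eq_zero_iff (three_ne_zero) |>.1 h3
      have hev : ∀ᶠ x in nhdsWithin B (Iio B), 1 ≤ u x := hblow.eventually_ge_atTop 1
      obtain ⟨x, hx1, hx2⟩ := (hev.and (Ioo_mem_nhdsLT hAB)).exists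
      have := hall x hx2
      linarith
    · positivity
  -- v is positive on (A,B)
  have hvpos : ∀ x ∈ Ioo A B, 0 < v x := by
    intro x hx
    rcases (hvnn x hx).lt_or_eq with h | h
    · exact h
    exfalso
    have hen := energy x hx
    have hxnn : 0 ≤ u x := hunn x ⟨hx.1.le, hx.2⟩
    nlinarith [pow_nonneg hxnn 3]
  -- strict monotonicity
  have hmono : StrictMonoOn u (Ioo A B) := by
    intro x hx y hy hxy
    obtain ⟨c, hc, hc2⟩ := mvt_aux hu' hx hy hxy
    have hcI : c ∈ Ioo A B := ⟨hx.1.trans hc.1, hc.2.trans hy.2⟩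
    rw [eq_div_iff (sub_pos.2 hxy).ne'] at hc2
    nlinarith [hvpos c hcI, sub_pos.2 hxy]
  refine ⟨?_, hmono⟩
  -- the integral identity
  set f : ℝ → ℝ := fun t => 1 / Real.sqrt ((8 / 3) * t ^ 3 + (v A) ^ 2) with hfdef
  have hden : Continuous fun t : ℝ => (8 / 3) * t ^ 3 + (v A) ^ 2 :=
    (continuous_const.mul (continuous_pow 3)).add continuous_const
  have hfc : ∀ s : ℝ, 0 ≤ s → ContinuousAt f s := by
    intro s hs
    have hpos : 0 < (8 / 3) * s ^ 3 + (v A) ^ 2 :=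
      add_pos_of_nonneg_of_pos (by positivity) hCpos
    refine ContinuousAt.div continuousAt_const ?_ ?_
    · exact (Real.continuous_sqrt.comp hden).continuousAt
    · exact (Real.sqrt_pos.2 hpos).ne'
  have hmeasf : Measurable f := by
    exact measurable_const.div (Real.continuous_sqrt.comp hden).measurable
  have hint : ∀ s : ℝ, 0 ≤ s → IntervalIntegrable f volume 0 s := by
    intro s hs
    refine ContinuousOn.intervalIntegrable ?_
    intro t ht
    rw [uIcc_of_le hs] at ht
    exact (hfc t ht.1).continuousWithinAt
  have hF : ∀ s : ℝ, 0 ≤ s → HasDerivAt (fun r => ∫ t in (0:ℝ)..r, f t) (f s) s := by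
    intro s hs
    exact intervalIntegral.integral_hasDerivAt_right (hint s hs)
      ⟨univ, univ_mem, (hmeasf.aestronglyMeasurable)⟩ (hfc s hs)
  have hG : ∀ x ∈ Ioo A B,
      HasDerivAt (fun y => (∫ t in (0:ℝ)..(u y), f t) - (y - A)) 0 x := by
    intro x hx
    have h1 : HasDerivAt (fun y => ∫ t in (0:ℝ)..(u y), f t) (f (u x) * v x) x :=
      (hF (u x) (hunn x ⟨hx.1.le, hx.2⟩)).comp x (hu' x hx)
    have h2 : f (u x) * v x = 1 := by
      have hen := energy x hx
      have hvx := hvpos x hx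
      have he : (8 / 3) * (u x) ^ 3 + (v A) ^ 2 = (v x) ^ 2 := hen.symm
      simp only [hfdef]
      rw [he, Real.sqrt_sq hvx.le, div_mul_eq_mul_div, one_mul, div_self hvx.ne']
    have h3 := h1.sub ((hasDerivAt_id x).sub_const A)
    simp only [h2, sub_self, id] at h3
    exact h3
  have hGlim : Tendsto (fun y => (∫ t in (0:ℝ)..(u y), f t) - (y - A))
      (nhdsWithin A (Ioi A)) (nhds 0) := by
    have hF0 : ContinuousAt (fun r => ∫ t in (0:ℝ)..r, f t) 0 := (hF 0 le_rfl).continuousAt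
    have h1 : Tendsto (fun y => ∫ t in (0:ℝ)..(u y), f t) (nhdsWithin A (Ioi A))
        (nhds (∫ t in (0:ℝ)..(0:ℝ), f t)) := (hF0.tendsto).comp hulim
    rw [intervalIntegral.integral_same] at h1
    have h2 : Tendsto (fun y : ℝ => y - A) (nhdsWithin A (Ioi A)) (nhds (A - A)) :=
      ((continuous_id.sub continuous_const).tendsto A).mono_left nhdsWithin_le_nhds
    simpa using h1.sub h2
  intro x hx
  have h := const_aux hAB hG hGlim x hx
  linarith
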